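/- Let M be a monoidal category with coequalizers preserved by tensoring, let A and B be algebra objects in M. Suppose X is an A-B-bimodule and Y is a B-A-bimodule such that X ⊗_B Y ≅ A as A-A-bimodules and Y ⊗_A X ≅ B as B-B-bimodules. Then the functors (−) ⊗_A X and (−) ⊗_B Y define mutually inverse equivalences between the category of right A-modules and the category of right B-modules in M. -/

import Mathlib

open CategoryTheory MonoidalCategory CategoryTheory.Limits

universe w₀ v₀ u₀

/-- Auxiliary: postcomposition with a 1-cell admitting an inverse up to iso gives an
equivalence of hom-categories in any bicategory. -/
noncomputable def auxEquiv {B : Type u₀} [Bicategory.{w₀, v₀} B] (a : B) {b c : B}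
    (f : b ⟶ c) (g : c ⟶ b) (h1 : f ≫ g ≅ 𝟙 b) (h2 : g ≫ f ≅ 𝟙 c) :
    (a ⟶ b) ≌ (a ⟶ c) :=
  CategoryTheory.Equivalence.mk ((Bicategory.postcomposing a b c).obj f)
    ((Bicategory.postcomposing a c b).obj g)
    ((Bicategory.rightUnitorNatIso a b).symm ≪≫
      (Bicategory.postcomposing a b b).mapIso h1.symm ≪≫
      (Bicategory.associatorNatIsoLeft a f g).symm)
    (Bicategory.associatorNatIsoLeft a g f ≪≫
      (Bicategory.postcomposing a c c).mapIso h2 ≪≫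
      Bicategory.rightUnitorNatIso a c)

universe v u

theorem stmt11 {M : Type u} [Category.{v} M] [MonoidalCategory M]
    [HasCoequalizers M]
    [∀ X : M, PreservesColimitsOfSize.{0, 0} (tensorLeft X)]
    [∀ X : M, PreservesColimitsOfSize.{0, 0} (tensorRight X)]
    (A B : Mon M) (X : Bimod A B) (Y : Bimod B A)
    (hXY : X.tensorBimod Y ≅ Bimod.regular A)
    (hYX : Y.tensorBimod X ≅ Bimod.regular B) :
    ∃ E : Bimod (Mon.trivial M) A ≌ Bimod (Mon.trivial M) B,
      (∀ P : Bimod (Mon.trivial M) A, Nonempty (E.functor.obj P ≅ P.tensorBimod X)) ∧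
      (∀ Q : Bimod (Mon.trivial M) B, Nonempty (E.inverse.obj Q ≅ Q.tensorBimod Y)) :=
  ⟨@auxEquiv (Mon M) Bimod.monBicategory (Mon.trivial M) A B X Y hXY hYX,
    fun P => ⟨Iso.refl _⟩, fun Q => ⟨Iso.refl _⟩⟩
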